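/- Let 𝒜 be a category with binary products, ℬ a category, G : ℬ ⥤ 𝒜 a functor, and 𝒳 = Comma (𝟭 𝒜) G. A family of morphisms ((g_i, h_i) : (F_i, E_i, α_i) ⟶ (F, E, α))_{i∈I} in 𝒳 is jointly epimorphic if and only if the family (g_i : F_i ⟶ F)_{i∈I} is jointly epimorphic in 𝒜 and the family (h_i : E_i ⟶ E)_{i∈I} is jointly epimorphic in ℬ. -/

import Mathlib

open CategoryTheory Limits

/-- A family of morphisms `(e i : Xs i ⟶ X)` is jointly epimorphic if any two morphisms
`a, b : X ⟶ Y` with `a ∘ e i = b ∘ e i` for all `i` are equal. -/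
def JointlyEpi {C : Type*} [Category C] {ι : Type*} {X : C} {Xs : ι → C}
    (e : ∀ i, Xs i ⟶ X) : Prop :=
  ∀ {Y : C} (a b : X ⟶ Y), (∀ i, e i ≫ a = e i ≫ b) → a = b

/-- A family of morphisms in the comma category `Comma (𝟭 𝒜) G` (for `𝒜` with binary
products) is jointly epimorphic iff both families of components are jointly epimorphic. -/
theorem jointlyEpi_comma_iff
    {A : Type*} [Category A] {B : Type*} [Category B] [HasBinaryProducts A] (G : B ⥤ A)
    {ι : Type*} {X : Comma (𝟭 A) G} {Z : ι → Comma (𝟭 A) G} (φ : ∀ i, Z i ⟶ X) :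
    JointlyEpi φ ↔
      (JointlyEpi (fun i => (φ i).left) ∧ JointlyEpi (fun i => (φ i).right)) := by
  constructor
  · intro h
    constructor
    · intro Y a b hab
      let W : Comma (𝟭 A) G := ⟨Y ⨯ G.obj X.right, X.right, prod.snd⟩
      have key := h (Y := W)
        ⟨prod.lift a X.hom, 𝟙 X.right, by simpa [W] using prod.lift_snd (f := a) (g := X.hom)⟩
        ⟨prod.lift b X.hom, 𝟙 X.right, by simpa [W] using prod.lift_snd (f := b) (g := X.hom)⟩
        (fun i => by
          apply CommaMorphism.ext
          · apply Limits.prod.hom_ext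
            · simpa [prod.lift_fst (f := (φ i).left ≫ a) (g := (φ i).left ≫ X.hom),
                prod.lift_fst (f := (φ i).left ≫ b) (g := (φ i).left ≫ X.hom)] using hab i
            · simp [prod.lift_snd (f := (φ i).left ≫ a) (g := (φ i).left ≫ X.hom),
                prod.lift_snd (f := (φ i).left ≫ b) (g := (φ i).left ≫ X.hom)]
          · rfl)
      have h2 := congrArg CommaMorphism.left key
      have h3 := congrArg (fun t => t ≫ prod.fst) h2
      simpa [prod.lift_fst (f := a) (g := X.hom), prod.lift_fst (f := b) (g := X.hom)] using h3
    · intro Y a b hab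
      let W : Comma (𝟭 A) G := ⟨G.obj Y, Y, 𝟙 _⟩
      have key := h (Y := W)
        ⟨X.hom ≫ G.map a, a, by simp [W]⟩
        ⟨X.hom ≫ G.map b, b, by simp [W]⟩
        (fun i => by
          apply CommaMorphism.ext
          · have := (φ i).w
            simp only [Functor.id_map] at this
            simp only [Comma.comp_left]
            rw [← Category.assoc, this, ← Category.assoc, this,
              Category.assoc, Category.assoc, ← G.map_comp, ← G.map_comp, hab i]
          · exact hab i)
      exact congrArg CommaMorphism.right key
  · rintro ⟨hl, hr⟩ Y a b hab
    apply CommaMorphism.ext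
    · exact hl a.left b.left (fun i => by
        have := congrArg CommaMorphism.left (hab i)
        simpa using this)
    · exact hr a.right b.right (fun i => by
        have := congrArg CommaMorphism.right (hab i)
        simpa using this)
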